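/- If P = Σ_{k≥0} p_k Λ^{-k} with p_0 = 1 is a dressing operator satisfying L = P Λ P^{-1}, then the operator M = ε P_x P^{-1} satisfies [M, L^m] = ε ∂_x(L^m) for every m ≥ 1, where ∂_x(L^m) denotes the operator obtained by differentiating the coefficients of L^m in x. -/
import Mathlib


/-- If `P` is an invertible dressing operator with `P Λ = L P` (i.e. `L = P Λ P⁻¹`), `∂`
is a derivation of the operator ring with `∂Λ = 0`, and `ε` is central, then
`M = ε ∂P · P⁻¹` satisfies `[M, L^m] = ε ∂(L^m)` for every `m ≥ 1`. -/
theorem dressing_commutator_eq_deriv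
    (R : Type*) [Ring R] (d : R →+ R)
    (hd : ∀ a b : R, d (a * b) = d a * b + a * d b)
    (ε Λ L : R) (hε : ∀ r : R, ε * r = r * ε)
    (P : Rˣ) (hΛ : d Λ = 0) (hPL : (P : R) * Λ = L * (P : R)) :
    ∀ m : ℕ, 1 ≤ m →
      (ε * d (P : R) * ((P⁻¹ : Rˣ) : R)) * L ^ m
        - L ^ m * (ε * d (P : R) * ((P⁻¹ : Rˣ) : R))
      = ε * d (L ^ m) := by
  have hd1 : d 1 = 0 := by
    have h := hd 1 1
    rw [mul_one, mul_one, one_mul] at h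
    exact (left_eq_add.mp h)
  have hdΛm : ∀ k : ℕ, d (Λ ^ k) = 0 := by
    intro k
    induction k with
    | zero => simpa using hd1
    | succ n ih => rw [pow_succ, hd, ih, hΛ]; simp
  have hcomm : ∀ k : ℕ, L ^ k * (P : R) = (P : R) * Λ ^ k := by
    intro k
    induction k with
    | zero => simp
    | succ n ih =>
      rw [pow_succ, pow_succ, mul_assoc, ← hPL, ← mul_assoc, ih, mul_assoc]
  intro m _
  have hLm : L ^ m = (P : R) * Λ ^ m * ((P⁻¹ : Rˣ) : R) := by
    rw [← hcomm m, mul_assoc]; simp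
  have hdPinv : d ((P⁻¹ : Rˣ) : R) = -(((P⁻¹ : Rˣ) : R) * d (P : R) * ((P⁻¹ : Rˣ) : R)) := by
    have h0 : d (P : R) * ((P⁻¹ : Rˣ) : R) + (P : R) * d ((P⁻¹ : Rˣ) : R) = 0 := by
      rw [← hd]; simp [hd1]
    have h1 : (P : R) * d ((P⁻¹ : Rˣ) : R) = -(d (P : R) * ((P⁻¹ : Rˣ) : R)) :=
      eq_neg_of_add_eq_zero_left (by rw [add_comm]; exact h0)
    calc d ((P⁻¹ : Rˣ) : R) = ((P⁻¹ : Rˣ) : R) * ((P : R) * d ((P⁻¹ : Rˣ) : R)) := by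
            rw [← mul_assoc]; simp
      _ = -(((P⁻¹ : Rˣ) : R) * d (P : R) * ((P⁻¹ : Rˣ) : R)) := by
            rw [h1]; noncomm_ring
  have hdLm : ε * d (L ^ m) =
      ε * (d (P : R) * (Λ ^ m * ((P⁻¹ : Rˣ) : R))
        + (P : R) * Λ ^ m * d ((P⁻¹ : Rˣ) : R)) := by
    rw [hLm, hd, hd, hdΛm]
    noncomm_ring
  rw [hdLm, hdPinv, hLm]
  have hPinvP : ((P⁻¹ : Rˣ) : R) * (P : R) = 1 := by simp
  have e1 : ε * d (P : R) * ((P⁻¹ : Rˣ) : R) * ((P : R) * Λ ^ m * ((P⁻¹ : Rˣ) : R))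
      = ε * (d (P : R) * (Λ ^ m * ((P⁻¹ : Rˣ) : R))) := by
    calc ε * d (P : R) * ((P⁻¹ : Rˣ) : R) * ((P : R) * Λ ^ m * ((P⁻¹ : Rˣ) : R))
        = ε * d (P : R) * (((P⁻¹ : Rˣ) : R) * (P : R)) * (Λ ^ m * ((P⁻¹ : Rˣ) : R)) := by
          noncomm_ring
      _ = ε * (d (P : R) * (Λ ^ m * ((P⁻¹ : Rˣ) : R))) := by rw [hPinvP]; noncomm_ring
  have e2 : (P : R) * Λ ^ m * ((P⁻¹ : Rˣ) : R) * (ε * d (P : R) * ((P⁻¹ : Rˣ) : R))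
      = ε * ((P : R) * Λ ^ m * (((P⁻¹ : Rˣ) : R) * d (P : R) * ((P⁻¹ : Rˣ) : R))) := by
    calc (P : R) * Λ ^ m * ((P⁻¹ : Rˣ) : R) * (ε * d (P : R) * ((P⁻¹ : Rˣ) : R))
        = ((P : R) * Λ ^ m * ((P⁻¹ : Rˣ) : R) * ε) * (d (P : R) * ((P⁻¹ : Rˣ) : R)) := by
          noncomm_ring
      _ = (ε * ((P : R) * Λ ^ m * ((P⁻¹ : Rˣ) : R))) * (d (P : R) * ((P⁻¹ : Rˣ) : R)) := by
          rw [← hε]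
      _ = ε * ((P : R) * Λ ^ m * (((P⁻¹ : Rˣ) : R) * d (P : R) * ((P⁻¹ : Rˣ) : R))) := by
          noncomm_ring
  rw [e1, e2]
  noncomm_ring
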